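/- Suppose the sequence M̂ₙ of vectors satisfies the discretized memory equation M̂ₙ = (I + (Δτ/2)Λ)⁻¹ · (e^{nΔτΛ}(I − (Δτ/2)Λ)M̂₀ − ΔτΛ·Σ_{k=1}^{n−1} e^{(n−k)ΔτΛ} M̂ₖ) for all n ≥ 1, where Λ is a diagonal matrix and I ± (Δτ/2)Λ are invertible. Then M̂ₙ satisfies the recurrence M̂ₙ = e^{ΔτΛ}·M(Λ)·M̂ₙ₋₁ for all n ≥ 1, where M(Λ) = I − ΔτΛ(I + (Δτ/2)Λ)⁻¹. -/

import Mathlib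

open NormedSpace Matrix

private lemma commute_ninv {d : ℕ} {B X : Matrix (Fin d) (Fin d) ℂ}
    (h : IsUnit B) (hc : Commute X B) : Commute X B⁻¹ := by
  have hd := (Matrix.isUnit_iff_isUnit_det B).mp h
  have h1 : B * B⁻¹ = 1 := Matrix.mul_nonsing_inv B hd
  have h2 : B⁻¹ * B = 1 := Matrix.nonsing_inv_mul B hd
  show X * B⁻¹ = B⁻¹ * X
  calc X * B⁻¹ = B⁻¹ * (B * X) * B⁻¹ := by rw [← mul_assoc B⁻¹ B X, h2, one_mul]
    _ = B⁻¹ * (X * B) * B⁻¹ := by rw [← hc.eq]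
    _ = B⁻¹ * X := by rw [mul_assoc, mul_assoc, h1, mul_one]

private lemma step_id {d : ℕ} (Λ E : Matrix (Fin d) (Fin d) ℂ) (c dt : ℂ)
    (hA : IsUnit (1 + c • Λ)) (hΛE : Commute Λ E) :
    (1 + c • Λ)⁻¹ * (E * (1 + c • Λ) - dt • (Λ * E)) =
      E * (1 - dt • (Λ * (1 + c • Λ)⁻¹)) := by
  set A : Matrix (Fin d) (Fin d) ℂ := 1 + c • Λ with hAdef
  have hd := (Matrix.isUnit_iff_isUnit_det A).mp hA
  have h2 : A⁻¹ * A = 1 := Matrix.nonsing_inv_mul A hd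
  have hΛA : Commute Λ A := (Commute.one_right Λ).add_right ((Commute.refl Λ).smul_right c)
  have hAE : Commute A E := (Commute.one_left E).add_left (hΛE.smul_left c)
  have hEAi : Commute E A⁻¹ := commute_ninv hA hAE.symm
  have hΛAi : Commute Λ A⁻¹ := commute_ninv hA hΛA
  have key1 : A⁻¹ * (E * A) = E := by
    rw [← mul_assoc, ← hEAi.eq, mul_assoc, h2, mul_one]
  have key2 : A⁻¹ * (Λ * E) = E * (Λ * A⁻¹) := by
    calc A⁻¹ * (Λ * E) = (A⁻¹ * Λ) * E := by rw [mul_assoc]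
      _ = (Λ * A⁻¹) * E := by rw [← hΛAi.eq]
      _ = Λ * (A⁻¹ * E) := by rw [mul_assoc]
      _ = Λ * (E * A⁻¹) := by rw [← hEAi.eq]
      _ = (Λ * E) * A⁻¹ := by rw [mul_assoc]
      _ = (E * Λ) * A⁻¹ := by rw [hΛE.eq]
      _ = E * (Λ * A⁻¹) := by rw [mul_assoc]
  rw [mul_sub, mul_smul_comm, key1, key2, mul_sub, mul_one, mul_smul_comm]

private lemma base_id {d : ℕ} (Λ E : Matrix (Fin d) (Fin d) ℂ) (c : ℂ)
    (hΛE : Commute Λ E) :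
    E * (1 - c • Λ) = E * (1 + c • Λ) - (2 * c) • (Λ * E) := by
  have h : E * (c • Λ) = c • (Λ * E) := by rw [mul_smul_comm, hΛE.eq]
  rw [mul_sub, mul_add, mul_one, h, two_mul, add_smul]
  abel

private lemma mulVec_finsum {d : ℕ} (E : Matrix (Fin d) (Fin d) ℂ) {ι : Type*}
    (s : Finset ι) (f : ι → Fin d → ℂ) :
    ∑ k ∈ s, E *ᵥ f k = E *ᵥ ∑ k ∈ s, f k := by
  induction s using Finset.cons_induction with
  | empty => simp
  | cons a s ha ih => simp [Finset.sum_cons, Matrix.mulVec_add, ih]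

private lemma step_vec {d : ℕ} (Λ E A : Matrix (Fin d) (Fin d) ℂ) (dt : ℂ)
    (hΛE : Commute Λ E) (x t v : Fin d → ℂ) (hkey : A *ᵥ v = x - dt • (Λ *ᵥ t)) :
    A⁻¹ *ᵥ (E *ᵥ x - dt • (Λ *ᵥ (E *ᵥ t + E *ᵥ v))) =
      (A⁻¹ * (E * A - dt • (Λ * E))) *ᵥ v := by
  have h1 : Λ *ᵥ (E *ᵥ t) = E *ᵥ (Λ *ᵥ t) := by
    rw [Matrix.mulVec_mulVec, Matrix.mulVec_mulVec, hΛE.eq]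
  rw [Matrix.mulVec_add, smul_add, sub_add_eq_sub_sub, h1, ← Matrix.mulVec_smul,
    ← Matrix.mulVec_sub, ← hkey, Matrix.mulVec_mulVec, Matrix.mulVec_mulVec,
    ← Matrix.smul_mulVec, ← Matrix.sub_mulVec, Matrix.mulVec_mulVec]

/-- If the sequence `Mhₙ` satisfies the discretized memory equation
`Mhₙ = (I + (Δτ/2)Λ)⁻¹ (e^{nΔτΛ}(I − (Δτ/2)Λ)Mh₀ − ΔτΛ Σ_{k=1}^{n−1} e^{(n−k)ΔτΛ} Mhₖ)`
for all `n ≥ 1`, where `Λ` is diagonal and `I ± (Δτ/2)Λ` are invertible, then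
`Mhₙ = e^{ΔτΛ} M(Λ) Mhₙ₋₁` for all `n ≥ 1`, where `M(Λ) = I − ΔτΛ(I + (Δτ/2)Λ)⁻¹`. -/
theorem memory_recurrence {d : ℕ} (Λ : Matrix (Fin d) (Fin d) ℂ) (hdiag : Λ.IsDiag)
    (Δτ : ℝ) (hΔτ : 0 < Δτ)
    (hp : IsUnit (1 + ((Δτ : ℂ) / 2) • Λ)) (hm : IsUnit (1 - ((Δτ : ℂ) / 2) • Λ))
    (Mh : ℕ → (Fin d → ℂ))
    (heq : ∀ n : ℕ, 1 ≤ n →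
      Mh n = (1 + ((Δτ : ℂ) / 2) • Λ)⁻¹ *ᵥ
        (exp (((n : ℂ) * (Δτ : ℂ)) • Λ) *ᵥ ((1 - ((Δτ : ℂ) / 2) • Λ) *ᵥ Mh 0) -
          (Δτ : ℂ) • (Λ *ᵥ ∑ k ∈ Finset.Ico 1 n,
            exp ((((n : ℂ) - (k : ℂ)) * (Δτ : ℂ)) • Λ) *ᵥ Mh k))) :
    ∀ n : ℕ, 1 ≤ n →
      Mh n = (exp ((Δτ : ℂ) • Λ) *
        (1 - (Δτ : ℂ) • (Λ * (1 + ((Δτ : ℂ) / 2) • Λ)⁻¹))) *ᵥ Mh (n - 1) := by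
  have hΛE : ∀ t : ℂ, Commute Λ (exp (t • Λ)) :=
    fun t => ((Commute.refl Λ).smul_right t).exp_right
  have hexp : ∀ s t : ℂ, exp ((s + t) • Λ) = exp (s • Λ) * exp (t • Λ) := by
    intro s t
    rw [add_smul]
    exact Matrix.exp_add_of_commute (s • Λ) (t • Λ)
      (((Commute.refl Λ).smul_left s).smul_right t)
  set c : ℂ := (Δτ : ℂ) / 2 with hcdef
  set A : Matrix (Fin d) (Fin d) ℂ := 1 + c • Λ with hAdef
  have hdet := (Matrix.isUnit_iff_isUnit_det A).mp hp
  have hA1 : A * A⁻¹ = 1 := Matrix.mul_nonsing_inv A hdet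
  set E : Matrix (Fin d) (Fin d) ℂ := exp ((Δτ : ℂ) • Λ) with hEdef
  have hid : A⁻¹ * (E * A - (Δτ : ℂ) • (Λ * E)) = E * (1 - (Δτ : ℂ) • (Λ * A⁻¹)) :=
    step_id Λ E c (Δτ : ℂ) hp (hΛE _)
  have h2c : (2 : ℂ) * c = (Δτ : ℂ) := by rw [hcdef]; ring
  intro n hn
  obtain ⟨m, rfl⟩ : ∃ m, n = m + 1 := ⟨n - 1, by omega⟩
  rcases m with _ | p
  · -- base case n = 1
    have h1 := heq 1 le_rfl
    simp only [Nat.cast_one, one_mul, Finset.Ico_self, Finset.sum_empty,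
      Matrix.mulVec_zero, smul_zero, sub_zero] at h1
    rw [← hEdef] at h1
    show Mh 1 = (E * (1 - (Δτ : ℂ) • (Λ * A⁻¹))) *ᵥ Mh 0
    rw [h1, Matrix.mulVec_mulVec, Matrix.mulVec_mulVec, mul_assoc,
      base_id Λ E c (hΛE _), h2c, hid]
  · -- step case n = p + 2
    have hprev := heq (p + 1) (by omega)
    have key : A *ᵥ Mh (p + 1) =
        exp ((((p + 1 : ℕ) : ℂ) * (Δτ : ℂ)) • Λ) *ᵥ ((1 - c • Λ) *ᵥ Mh 0) -
          (Δτ : ℂ) • (Λ *ᵥ ∑ k ∈ Finset.Ico 1 (p + 1),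
            exp (((((p + 1 : ℕ) : ℂ) - (k : ℂ)) * (Δτ : ℂ)) • Λ) *ᵥ Mh k) := by
      rw [hprev, Matrix.mulVec_mulVec, hA1, Matrix.one_mulVec]
    have hcur := heq (p + 1 + 1) (by omega)
    rw [Finset.sum_Ico_succ_top (by omega : 1 ≤ p + 1)] at hcur
    rw [show (((p + 1 + 1 : ℕ) : ℂ) - ((p + 1 : ℕ) : ℂ)) * (Δτ : ℂ) = (Δτ : ℂ) by
      push_cast; ring] at hcur
    rw [Finset.sum_congr rfl (fun k hk => by
      rw [show (((p + 1 + 1 : ℕ) : ℂ) - (k : ℂ)) * (Δτ : ℂ) =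
        (Δτ : ℂ) + (((p + 1 : ℕ) : ℂ) - (k : ℂ)) * (Δτ : ℂ) by push_cast; ring,
        hexp, ← Matrix.mulVec_mulVec] :
          ∀ k ∈ Finset.Ico 1 (p + 1),
            exp (((((p + 1 + 1 : ℕ) : ℂ) - (k : ℂ)) * (Δτ : ℂ)) • Λ) *ᵥ Mh k =
            exp ((Δτ : ℂ) • Λ) *ᵥ
              (exp (((((p + 1 : ℕ) : ℂ) - (k : ℂ)) * (Δτ : ℂ)) • Λ) *ᵥ Mh k)),
      mulVec_finsum] at hcur
    rw [show ((p + 1 + 1 : ℕ) : ℂ) * (Δτ : ℂ) =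
      (Δτ : ℂ) + ((p + 1 : ℕ) : ℂ) * (Δτ : ℂ) by push_cast; ring, hexp,
      ← Matrix.mulVec_mulVec] at hcur
    rw [← hEdef] at hcur
    show Mh (p + 1 + 1) = (E * (1 - (Δτ : ℂ) • (Λ * A⁻¹))) *ᵥ Mh (p + 1)
    rw [hcur, step_vec Λ E A (Δτ : ℂ) (hΛE _) _ _ _ key, hid]
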